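/- arXiv:1811.12070 — 3 statements merged into one kernel-verified Lean document; each statement's English description precedes it below -/
import Mathlib

section
/- Heyde's law of large numbers: in the BHW model, for every θ > 0, the proportion N_n/(N_n+M_n) converges to p almost surely as n → ∞. -/
open MeasureTheory ProbabilityTheory Filter Real

lemma bhw_bernoulli_lower {x q : ℝ} (hx0 : 0 < x) (hx : x ≤ 1/2) (hq0 : 0 ≤ q) (hq1 : q ≤ 1) :
    1 - q*x - 2*x^2 ≤ (1-x)^q := by
  have h1x : (0:ℝ) < 1 - x := by linarith
  have hs : (-1:ℝ) ≤ x / (1-x) := le_trans (by norm_num) (by positivity : (0:ℝ) ≤ x/(1-x))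
  have key := _root_.rpow_one_add_le_one_add_mul_self hs hq0 hq1
  have h1 : (1:ℝ) + x/(1-x) = (1-x)⁻¹ := by field_simp; ring
  rw [h1, Real.inv_rpow h1x.le] at key
  -- key : ((1-x)^q)⁻¹ ≤ 1 + q * (x/(1-x))
  have hpow : (0:ℝ) < (1-x)^q := Real.rpow_pos_of_pos h1x q
  have h2 : (1-x)/(1 - x + q*x) ≤ (1-x)^q := by
    rw [div_le_iff₀ (by nlinarith)]
    have h3 : (1:ℝ) - x ≤ (1-x)^q * (1 - x + q*x) := by
      have := mul_le_mul_of_nonneg_left key hpow.le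
      rw [mul_inv_cancel₀ hpow.ne'] at this
      calc (1:ℝ) - x = (1-x) * 1 := by ring
        _ ≤ (1-x) * ((1-x)^q * (1 + q * (x/(1-x)))) := by
            nlinarith [mul_le_mul_of_nonneg_left this h1x.le]
        _ = (1-x)^q * ((1-x) + q*x * ((1-x)/(1-x))) := by ring
        _ = (1-x)^q * (1 - x + q*x) := by rw [div_self h1x.ne']; ring
    linarith
  refine le_trans ?_ h2
  rw [le_div_iff₀ (by nlinarith)]
  nlinarith [sq_nonneg x, sq_nonneg (q*x), mul_nonneg hq0 hx0.le]

lemma bhw_rate (c θ : ℝ) (hc : 1 ≤ c) (hθ0 : 0 < θ) (hθ1 : θ ≤ 1)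
    (v : ℕ → ℝ) (hv0 : ∀ n, 0 ≤ v n) (hv1 : ∀ n, v n ≤ 1)
    (hrec : ∀ n, 1 ≤ n → v (n+1) ≤ v n * (1 - θ/(c+(n+1:ℕ))) + 1/(c+(n+1:ℕ))^2) :
    ∀ n, 1 ≤ n → v n ≤ (16/θ + c + 1) * (c + (n:ℕ)) ^ (-(θ/2)) := by
  suffices h : ∀ q C : ℝ, q = θ/2 → C = 16/θ + c + 1 →
      ∀ n, 1 ≤ n → v n ≤ C * (c + (n:ℕ)) ^ (-q) from
    fun n hn => h _ _ rfl rfl n hn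
  intro q C hq hC
  have hq0 : 0 < q := by rw [hq]; positivity
  have hq1 : q ≤ 1 := by rw [hq]; linarith
  have h8q : 8/q = 16/θ := by rw [hq]; field_simp; ring
  have hCq : 8/q ≤ C := by rw [h8q, hC]; linarith
  have h16 : 0 < 16/θ := by positivity
  have hCc : c + 1 ≤ C := by rw [hC]; linarith
  have hC0 : 0 < C := by linarith
  have hsmall : ∀ s : ℝ, 1 ≤ s → s ≤ C → 1 ≤ C * s ^ (-q) := by
    intro s hs1 hsC
    have h1 : s ^ (-(1:ℝ)) ≤ s ^ (-q) := Real.rpow_le_rpow_of_exponent_le hs1 (by linarith)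
    rw [Real.rpow_neg_one] at h1
    have hs0 : 0 < s := lt_of_lt_of_le one_pos hs1
    calc (1:ℝ) = s * s⁻¹ := by field_simp
      _ ≤ C * s⁻¹ := by gcongr
      _ ≤ C * s ^ (-q) := mul_le_mul_of_nonneg_left h1 hC0.le
  intro n hn
  induction n with
  | zero => omega
  | succ k ih =>
    rcases Nat.eq_or_lt_of_le hn with h1 | hk1
    · have hk0 : k = 0 := by omega
      subst hk0
      calc v 1 ≤ 1 := hv1 1
        _ ≤ C * (c+1) ^ (-q) := hsmall (c+1) (by linarith) hCc
        _ = C * (c + ((1:ℕ):ℝ)) ^ (-q) := by norm_num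
    · have hk : 1 ≤ k := by omega
      have ihk := ih hk
      have hrk := hrec k hk
      obtain ⟨s, hs⟩ : ∃ s : ℝ, s = c + ((k:ℕ):ℝ) := ⟨_, rfl⟩
      obtain ⟨s', hs'⟩ : ∃ s' : ℝ, s' = c + ((k+1:ℕ):ℝ) := ⟨_, rfl⟩
      rw [← hs] at ihk
      rw [← hs'] at hrk ⊢
      have hk0 : (0:ℝ) ≤ (k:ℝ) := Nat.cast_nonneg k
      have hs1 : 1 ≤ s := by rw [hs]; linarith
      have hss : s' = s + 1 := by rw [hs, hs']; push_cast; ring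
      have hs'2 : 2 ≤ s' := by rw [hss]; linarith
      have hs'0 : 0 < s' := by linarith
      have hs0 : 0 < s := by linarith
      rcases le_or_gt s' C with hcase | hcase
      · calc v (k+1) ≤ 1 := hv1 _
          _ ≤ C * s' ^ (-q) := hsmall s' (by linarith) hcase
      · obtain ⟨A, hA⟩ : ∃ A : ℝ, A = s ^ (-q) := ⟨_, rfl⟩
        rw [← hA] at ihk
        have hA0 : 0 < A := hA ▸ Real.rpow_pos_of_pos hs0 _
        have hA1 : s⁻¹ ≤ A := by
          have := Real.rpow_le_rpow_of_exponent_le hs1 (by linarith : -(1:ℝ) ≤ -q)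
          rwa [Real.rpow_neg_one, ← hA] at this
        have hCA0 : 0 ≤ C*A := mul_nonneg hC0.le hA0.le
        have hθx : 0 ≤ 1 - θ/s' := by
          have : θ/s' ≤ 1 := by rw [div_le_one hs'0]; linarith
          linarith
        have step1 : v (k+1) ≤ C * A * (1 - θ/s') + 1/s'^2 :=
          le_trans hrk (add_le_add_left (mul_le_mul_of_nonneg_right ihk hθx) _)
        have hx0 : 0 < 1/s' := one_div_pos.mpr hs'0
        have hx12 : 1/s' ≤ 1/2 := by rw [div_le_div_iff₀ hs'0 (by norm_num)]; linarith
        have hB := bhw_bernoulli_lower hx0 hx12 hq0.le hq1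
        have hfrac : 1 - 1/s' = s / s' := by rw [hss]; field_simp; ring
        have hsplit : s' ^ (-q) = A * (1 - 1/s')^q := by
          rw [hfrac, hA, Real.div_rpow hs0.le hs'0.le, Real.rpow_neg hs0.le,
            Real.rpow_neg hs'0.le]
          field_simp
        have hqs : 8 < q * s' := by
          have h' : 8/q < s' := lt_of_le_of_lt hCq hcase
          rw [div_lt_iff₀ hq0] at h'
          linarith [h']
        have hCq8 : 8 ≤ C*q := by rw [div_le_iff₀ hq0] at hCq; linarith
        have hAs : 1 ≤ A*s := by
          have h2 : s⁻¹ * s ≤ A * s := mul_le_mul_of_nonneg_right hA1 hs0.le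
          rwa [inv_mul_cancel₀ hs0.ne'] at h2
        have g1 : C*A*8 ≤ C*A*(q*s') := mul_le_mul_of_nonneg_left hqs.le hCA0
        have g2 : (8:ℝ)*1 ≤ (C*q)*(A*s) :=
          mul_le_mul hCq8 hAs zero_le_one (mul_nonneg hC0.le hq0.le)
        have g3 : (C*q)*(A*s) ≤ (C*q)*(A*s') := by
          have h4 : A*s ≤ A*s' := mul_le_mul_of_nonneg_left (by linarith) hA0.le
          exact mul_le_mul_of_nonneg_left h4 (mul_nonneg hC0.le hq0.le)
        have hθq : θ = 2*q := by rw [hq]; ring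
        have expand : C*A*(s'^2 - θ*s') + 1 ≤ C*A*(s'^2 - q*s' - 2) := by
          rw [hθq]; nlinarith [g1, g2, g3, hCA0]
        have main : (C*A*(1 - θ/s') + 1/s'^2) * s'^2
            ≤ (C*A*(1 - q*(1/s') - 2*(1/s')^2)) * s'^2 := by
          have hid1 : (1 - θ/s')*s'^2 = s'^2 - θ*s' := by field_simp
          have hid2 : (1 - q*(1/s') - 2*(1/s')^2)*s'^2 = s'^2 - q*s' - 2 := by
            field_simp
          have hid3 : (1/s'^2)*s'^2 = 1 := by field_simp
          calc (C*A*(1 - θ/s') + 1/s'^2) * s'^2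
              = C*A*((1-θ/s')*s'^2) + (1/s'^2)*s'^2 := by ring
            _ = C*A*(s'^2 - θ*s') + 1 := by rw [hid1, hid3]
            _ ≤ C*A*(s'^2 - q*s' - 2) := expand
            _ = C*A*((1 - q*(1/s') - 2*(1/s')^2)*s'^2) := by rw [hid2]
            _ = (C*A*(1 - q*(1/s') - 2*(1/s')^2)) * s'^2 := by ring
        have mid : C*A*(1 - θ/s') + 1/s'^2 ≤ C*A*(1 - q*(1/s') - 2*(1/s')^2) :=
          le_of_mul_le_mul_right main (pow_pos hs'0 2)
        calc v (k+1) ≤ C*A*(1 - θ/s') + 1/s'^2 := step1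
          _ ≤ C*A*(1 - q*(1/s') - 2*(1/s')^2) := mid
          _ = C*(A*(1 - q*(1/s') - 2*(1/s')^2)) := by ring
          _ ≤ C*(A*(1-1/s')^q) :=
              mul_le_mul_of_nonneg_left (mul_le_mul_of_nonneg_left hB hA0.le) hC0.le
          _ = C * s' ^ (-q) := by rw [hsplit]

lemma bhw_pow_gap (a : ℝ) (ha : 1 ≤ a) (m : ℕ) (hm : 1 ≤ m) :
    (a+1)^m - a^m ≤ m * (a+1)^(m-1) := by
  have h := geom_sum₂_mul (a+1) a m
  rw [show (a+1) - a = (1:ℝ) by ring, mul_one] at h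
  rw [← h]
  have hb : ∀ i ∈ Finset.range m, (a+1)^i * a^(m-1-i) ≤ (a+1)^(m-1) := by
    intro i hi
    have hi' : i < m := Finset.mem_range.mp hi
    have h1 : a^(m-1-i) ≤ (a+1)^(m-1-i) := pow_le_pow_left₀ (by linarith) (by linarith) _
    have h2 : (a+1)^i * a^(m-1-i) ≤ (a+1)^i * (a+1)^(m-1-i) :=
      mul_le_mul_of_nonneg_left h1 (by positivity)
    rw [← pow_add] at h2
    have : i + (m-1-i) = m - 1 := by omega
    rwa [this] at h2
  calc ∑ i ∈ Finset.range m, (a+1)^i * a^(m-1-i)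
      ≤ (Finset.range m).card • ((a+1)^(m-1)) := Finset.sum_le_card_nsmul _ _ _ hb
    _ = m * (a+1)^(m-1) := by rw [Finset.card_range, nsmul_eq_mul]

set_option maxHeartbeats 4000000 in
/-- Heyde's law of large numbers for the BHW model: for every `θ > 0`, the proportion
`Nₙ/(Nₙ+Mₙ)` converges to `p` almost surely. -/
theorem BHW_LLN
    {Ω : Type*} [MeasurableSpace Ω] (μ : Measure Ω) [IsProbabilityMeasure μ]
    (p θ : ℝ) (hp : p ∈ Set.Ioo (0 : ℝ) 1) (hθ : θ ∈ Set.Ioc (0 : ℝ) 1)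
    -- the decision process, taking values in `{0, 1}`, with `P(X₁ = 1) = p`
    (X : ℕ → Ω → ℝ) (hXmeas : ∀ n, Measurable (X n))
    (hX01 : ∀ n ω, X n ω = 0 ∨ X n ω = 1)
    (hX1 : μ {ω | X 1 ω = 1} = ENNReal.ofReal p)
    -- initial counts
    (N₀ M₀ : ℕ) (hstart : 0 < N₀ + M₀)
    -- the counting processes `Nₙ = N₀ + X₁ + ⋯ + Xₙ` and `Mₙ = M₀ + n − (X₁ + ⋯ + Xₙ)`
    (N M : ℕ → Ω → ℝ)
    (hN : ∀ n ω, N n ω = N₀ + ∑ i ∈ Finset.range n, X (i + 1) ω)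
    (hM : ∀ n ω, M n ω = M₀ + n - ∑ i ∈ Finset.range n, X (i + 1) ω)
    -- the defining conditional probabilities:
    -- `P(X_{n+1} = 1 | (Nₙ, Mₙ)) = θp + (1−θ) Nₙ/(Nₙ+Mₙ)` for `n ≥ 1`
    (hcond : ∀ n, 1 ≤ n →
      μ[X (n + 1) | MeasurableSpace.comap (fun ω => (N n ω, M n ω)) inferInstance]
        =ᵐ[μ] fun ω => θ * p + (1 - θ) * (N n ω / (N n ω + M n ω))) :
    ∀ᵐ ω ∂μ, Tendsto (fun n => N n ω / (N n ω + M n ω)) atTop (nhds p) := by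
  obtain ⟨hp0, hp1⟩ := hp
  obtain ⟨hθ0, hθ1⟩ := hθ
  obtain ⟨c, hcdef⟩ : ∃ c : ℝ, c = (N₀:ℝ) + (M₀:ℝ) := ⟨_, rfl⟩
  have hc1 : (1:ℝ) ≤ c := by
    rw [hcdef]
    have : (1:ℕ) ≤ N₀ + M₀ := hstart
    have := (Nat.one_le_cast (α := ℝ)).mpr this
    push_cast at this ⊢; linarith
  have hX01' : ∀ n ω, 0 ≤ X n ω ∧ X n ω ≤ 1 := by
    intro n ω; rcases hX01 n ω with h | h <;> rw [h] <;> norm_num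
  have hsum : ∀ n ω, N n ω + M n ω = c + n := by
    intro n ω; rw [hN, hM, hcdef]; push_cast; ring
  have hcn : ∀ n : ℕ, (0:ℝ) < c + n := by
    intro n
    have : (0:ℝ) ≤ n := Nat.cast_nonneg n
    linarith
  have hNbounds : ∀ n ω, 0 ≤ N n ω ∧ N n ω ≤ c + n := by
    intro n ω
    have hS0 : 0 ≤ ∑ i ∈ Finset.range n, X (i+1) ω :=
      Finset.sum_nonneg fun i _ => (hX01' (i+1) ω).1
    have hS1 : ∑ i ∈ Finset.range n, X (i+1) ω ≤ n := by
      calc ∑ i ∈ Finset.range n, X (i+1) ω ≤ ∑ i ∈ Finset.range n, 1 :=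
            Finset.sum_le_sum fun i _ => (hX01' (i+1) ω).2
        _ = n := by simp
    constructor
    · rw [hN]; positivity
    · rw [hN, hcdef]
      have : (0:ℝ) ≤ (M₀:ℝ) := Nat.cast_nonneg _
      linarith
  have hR01 : ∀ n ω, 0 ≤ N n ω / (N n ω + M n ω) ∧ N n ω / (N n ω + M n ω) ≤ 1 := by
    intro n ω
    rw [hsum]
    constructor
    · exact div_nonneg (hNbounds n ω).1 (hcn n).le
    · rw [div_le_one (hcn n)]; exact (hNbounds n ω).2
  obtain ⟨T, hTdef⟩ : ∃ T : ℕ → Ω → ℝ, T = fun n ω => N n ω / (N n ω + M n ω) - p := ⟨_, rfl⟩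
  have hTev : ∀ n ω, T n ω = N n ω / (N n ω + M n ω) - p := fun n ω => by rw [hTdef]
  have hTabs : ∀ n ω, |T n ω| ≤ 1 := by
    intro n ω
    rw [hTev]
    have := hR01 n ω
    rw [abs_le]; constructor <;> [linarith [this.1]; linarith [this.2]]
  have hNmeas : ∀ n, Measurable (N n) := by
    intro n
    have : N n = fun ω => (N₀:ℝ) + ∑ i ∈ Finset.range n, X (i+1) ω := funext (hN n)
    rw [this]
    exact measurable_const.add (Finset.measurable_sum _ fun i _ => hXmeas _)
  have hMmeas : ∀ n, Measurable (M n) := by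
    intro n
    have : M n = fun ω => (M₀:ℝ) + n - ∑ i ∈ Finset.range n, X (i+1) ω := funext (hM n)
    rw [this]
    exact (measurable_const.sub (Finset.measurable_sum _ fun i _ => hXmeas _))
  have hTmeas : ∀ n, Measurable (T n) := by
    intro n
    rw [hTdef]
    exact ((hNmeas n).div ((hNmeas n).add (hMmeas n))).sub measurable_const
  have hbint : ∀ (f : Ω → ℝ) (b : ℝ), Measurable f → (∀ ω, |f ω| ≤ b) → Integrable f μ := by
    intro f b hf hb
    exact (integrable_const b).mono' hf.aestronglyMeasurable
      (ae_of_all _ fun ω => by simpa [Real.norm_eq_abs] using hb ω)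
  obtain ⟨v, hvdef⟩ : ∃ v : ℕ → ℝ, v = fun n => ∫ ω, (T n ω)^2 ∂μ := ⟨_, rfl⟩
  have hT2meas : ∀ n, Measurable (fun ω => (T n ω)^2) := fun n => (hTmeas n).pow_const 2
  have hT2le : ∀ n ω, (T n ω)^2 ≤ 1 := by
    intro n ω
    have h := hTabs n ω
    have := abs_nonneg (T n ω)
    nlinarith [sq_abs (T n ω)]
  have hT2int : ∀ n, Integrable (fun ω => (T n ω)^2) μ := by
    intro n
    refine hbint _ 1 (hT2meas n) fun ω => ?_
    rw [abs_of_nonneg (sq_nonneg _)]; exact hT2le n ω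
  have hv0 : ∀ n, 0 ≤ v n := by
    intro n; rw [hvdef]; exact integral_nonneg fun ω => sq_nonneg _
  have hv1 : ∀ n, v n ≤ 1 := by
    intro n
    rw [hvdef]
    calc ∫ ω, (T n ω)^2 ∂μ ≤ ∫ _ω, (1:ℝ) ∂μ :=
          integral_mono (hT2int n) (integrable_const 1) fun ω => hT2le n ω
      _ = 1 := by simp
  -- the conditional expectation step
  have hcore : ∀ n, 1 ≤ n → ∫ ω, T n ω * (X (n+1) ω - p) ∂μ = (1-θ) * v n := by
    intro n hn
    have hGle : MeasurableSpace.comap (fun ω => (N n ω, M n ω)) inferInstance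
        ≤ ‹MeasurableSpace Ω› := Measurable.comap_le ((hNmeas n).prodMk (hMmeas n))
    set Gm : MeasurableSpace Ω :=
      MeasurableSpace.comap (fun ω => (N n ω, M n ω)) inferInstance with hGm
    haveI : IsFiniteMeasure (μ.trim hGle) := isFiniteMeasure_trim hGle
    -- T n is Gm-strongly measurable
    have hTG : StronglyMeasurable[Gm] (T n) := by
      have hpair : Measurable[Gm] (fun ω => (N n ω, M n ω)) := comap_measurable _
      have hf : Measurable (fun z : ℝ × ℝ => z.1 / (z.1 + z.2) - p) :=
        (measurable_fst.div (measurable_fst.add measurable_snd)).sub measurable_const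
      have hcomp : Measurable[Gm] (T n) := by
        have : T n = (fun z : ℝ × ℝ => z.1 / (z.1 + z.2) - p) ∘ (fun ω => (N n ω, M n ω)) := by
          funext ω; rw [hTdef]; rfl
        rw [this]
        exact hf.comp hpair
      exact hcomp.stronglyMeasurable
    have hXint : Integrable (X (n+1)) μ := by
      refine hbint _ 1 (hXmeas _) fun ω => ?_
      have := hX01' (n+1) ω
      rw [abs_le]; exact ⟨by linarith [this.1], this.2⟩
    have hmul := condExp_stronglyMeasurable_mul_of_bound hGle hTG hXint 1
      (ae_of_all _ fun ω => by simpa [Real.norm_eq_abs] using hTabs n ω)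
    -- step 1 : ∫ T·X = ∫ T·E[X|G]
    have h1 : ∫ ω, (T n * X (n+1)) ω ∂μ = ∫ ω, (T n ω) * (μ[X (n+1)|Gm]) ω ∂μ := by
      rw [← integral_condExp hGle (f := T n * X (n+1))]
      exact integral_congr_ae hmul
    -- step 2 : use hcond
    have h2 : ∫ ω, (T n ω) * (μ[X (n+1)|Gm]) ω ∂μ
        = ∫ ω, T n ω * (θ*p + (1-θ)*(N n ω / (N n ω + M n ω))) ∂μ := by
      refine integral_congr_ae ((hcond n hn).mono fun ω hω => ?_)
      dsimp only at hω ⊢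
      rw [hω]
    -- pointwise algebra
    have h3 : ∀ ω, T n ω * (θ*p + (1-θ)*(N n ω / (N n ω + M n ω)))
        = (1-θ)*(T n ω)^2 + p * T n ω := by
      intro ω
      have hR : N n ω / (N n ω + M n ω) = T n ω + p := by rw [hTdef]; ring
      rw [hR]; ring
    have hTint : Integrable (T n) μ := hbint _ 1 (hTmeas n) (hTabs n)
    have hTXint : Integrable (T n * X (n+1)) μ := by
      refine hbint _ 1 ((hTmeas n).mul (hXmeas _)) fun ω => ?_
      have h := hX01' (n+1) ω
      have h' := hTabs n ω
      rw [Pi.mul_apply, abs_mul]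
      calc |T n ω| * |X (n+1) ω| ≤ 1 * 1 := by
            apply mul_le_mul h' _ (abs_nonneg _) zero_le_one
            rw [abs_le]; exact ⟨by linarith [h.1], h.2⟩
        _ = 1 := by norm_num
    have expand : (fun ω => T n ω * (X (n+1) ω - p))
        = fun ω => (T n * X (n+1)) ω - p * T n ω := by
      funext ω; simp [Pi.mul_apply]; ring
    rw [expand, integral_sub hTXint (hTint.const_mul p), h1, h2]
    have h4 : ∫ ω, T n ω * (θ*p + (1-θ)*(N n ω / (N n ω + M n ω))) ∂μ
        = (1-θ) * v n + p * ∫ ω, T n ω ∂μ := by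
      calc ∫ ω, T n ω * (θ*p + (1-θ)*(N n ω / (N n ω + M n ω))) ∂μ
          = ∫ ω, ((1-θ)*(T n ω)^2 + p * T n ω) ∂μ := by
            refine integral_congr_ae (ae_of_all _ fun ω => h3 ω)
        _ = (1-θ) * v n + p * ∫ ω, T n ω ∂μ := by
            rw [integral_add ((hT2int n).const_mul (1-θ)) (hTint.const_mul p),
              integral_const_mul, integral_const_mul, hvdef]
    rw [h4, integral_const_mul]
    ring
  -- one-step recursion for T
  have hTrec : ∀ n ω, (c + ((n+1:ℕ):ℝ)) * T (n+1) ω = (c + (n:ℕ)) * T n ω + (X (n+1) ω - p) := by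
    intro n ω
    have hNsucc : N (n+1) ω = N n ω + X (n+1) ω := by
      rw [hN, hN, Finset.sum_range_succ]; ring
    have h1 := hcn n
    have h2 := hcn (n+1)
    rw [hTev (n+1) ω, hTev n ω, hsum, hsum, hNsucc]
    push_cast at h2 ⊢
    field_simp
    ring
  -- recursion for v
  have hrec : ∀ n, 1 ≤ n → v (n+1) ≤ v n * (1 - θ/(c+(n+1:ℕ))) + 1/(c+(n+1:ℕ))^2 := by
    intro n hn
    have hs0 : (0:ℝ) < c + (n:ℕ) := hcn n
    have hs'0 : (0:ℝ) < c + ((n+1:ℕ):ℝ) := hcn (n+1)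
    have hss : c + ((n+1:ℕ):ℝ) = (c + (n:ℕ)) + 1 := by push_cast; ring
    have hs1 : (1:ℝ) ≤ c + (n:ℕ) := by
      have : (0:ℝ) ≤ (n:ℝ) := Nat.cast_nonneg n
      linarith
    -- abbreviations as plain reals
    -- ξ bounds
    have hξabs : ∀ ω, |X (n+1) ω - p| ≤ 1 := by
      intro ω
      have := hX01' (n+1) ω
      rw [abs_le]; exact ⟨by linarith [this.1], by linarith [this.2]⟩
    have hξmeas : Measurable (fun ω => X (n+1) ω - p) := (hXmeas _).sub measurable_const
    have hξ2int : Integrable (fun ω => (X (n+1) ω - p)^2) μ := by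
      refine hbint _ 1 (hξmeas.pow_const 2) fun ω => ?_
      rw [abs_of_nonneg (sq_nonneg _)]
      nlinarith [hξabs ω, abs_nonneg (X (n+1) ω - p), sq_abs (X (n+1) ω - p)]
    have hTξint : Integrable (fun ω => T n ω * (X (n+1) ω - p)) μ := by
      refine hbint _ 1 ((hTmeas n).mul hξmeas) fun ω => ?_
      rw [abs_mul]
      calc |T n ω| * |X (n+1) ω - p| ≤ 1 * 1 :=
            mul_le_mul (hTabs n ω) (hξabs ω) (abs_nonneg _) zero_le_one
        _ = 1 := by norm_num
    -- E = ∫ ξ²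
    have hE1 : ∫ ω, (X (n+1) ω - p)^2 ∂μ ≤ 1 := by
      calc ∫ ω, (X (n+1) ω - p)^2 ∂μ ≤ ∫ _ω, (1:ℝ) ∂μ := by
            refine integral_mono hξ2int (integrable_const 1) fun ω => ?_
            nlinarith [hξabs ω, abs_nonneg (X (n+1) ω - p), sq_abs (X (n+1) ω - p)]
        _ = 1 := by simp
    -- expand the square identity pointwise
    have e1 : ∀ ω, ((c + ((n+1:ℕ):ℝ)) * T (n+1) ω)^2
        = (c+(n:ℕ))^2*(T n ω)^2 + 2*(c+(n:ℕ))*(T n ω * (X (n+1) ω - p)) + (X (n+1) ω - p)^2 := by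
      intro ω; rw [hTrec n ω]; ring
    -- integral identity
    have hveq : (c + ((n+1:ℕ):ℝ))^2 * v (n+1)
        = (c+(n:ℕ))^2 * v n + 2*(c+(n:ℕ))*((1-θ) * v n) + ∫ ω, (X (n+1) ω - p)^2 ∂μ := by
      have l1 : (c + ((n+1:ℕ):ℝ))^2 * v (n+1) = ∫ ω, ((c + ((n+1:ℕ):ℝ)) * T (n+1) ω)^2 ∂μ := by
        rw [hvdef]
        rw [← integral_const_mul]
        congr 1
        funext ω
        ring
      rw [l1]
      have l2 : (fun ω => ((c + ((n+1:ℕ):ℝ)) * T (n+1) ω)^2)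
          = fun ω => ((c+(n:ℕ))^2*(T n ω)^2 + 2*(c+(n:ℕ))*(T n ω * (X (n+1) ω - p)))
              + (X (n+1) ω - p)^2 := by
        funext ω; rw [e1 ω]
      rw [l2]
      have i1 : Integrable (fun ω => (c+(n:ℕ))^2 * (T n ω)^2) μ := (hT2int n).const_mul _
      have i2 : Integrable (fun ω => 2*(c+(n:ℕ)) * (T n ω * (X (n+1) ω - p))) μ :=
        hTξint.const_mul _
      have i12 : Integrable (fun ω => (c+(n:ℕ))^2 * (T n ω)^2
          + 2*(c+(n:ℕ)) * (T n ω * (X (n+1) ω - p))) μ := i1.add i2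
      rw [integral_add i12 hξ2int, integral_add i1 i2,
        integral_const_mul, integral_const_mul, hcore n hn]
      rw [hvdef]
    -- conclude by algebra
    have hvnn := hv0 n
    have hEnn : 0 ≤ ∫ ω, (X (n+1) ω - p)^2 ∂μ := integral_nonneg fun ω => sq_nonneg _
    rw [← sub_nonneg]
    have key : (v n * (1 - θ/(c+(n+1:ℕ))) + 1/(c+(n+1:ℕ))^2 - v (n+1)) * (c + ((n+1:ℕ):ℝ))^2
        ≥ 0 := by
      have expand : (v n * (1 - θ/(c+(n+1:ℕ))) + 1/(c+(n+1:ℕ))^2) * (c + ((n+1:ℕ):ℝ))^2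
          = v n * ((c + ((n+1:ℕ):ℝ))^2 - θ*(c + ((n+1:ℕ):ℝ))) + 1 := by
        field_simp
      have : (v n * (1 - θ/(c+(n+1:ℕ))) + 1/(c+(n+1:ℕ))^2 - v (n+1)) * (c + ((n+1:ℕ):ℝ))^2
          = v n * ((c + ((n+1:ℕ):ℝ))^2 - θ*(c + ((n+1:ℕ):ℝ)))
            + 1 - (c + ((n+1:ℕ):ℝ))^2 * v (n+1) := by
        rw [sub_mul, expand]; ring
      rw [this, hveq, hss]
      have hcoef : 0 ≤ 1 - θ + θ*(c+(n:ℕ)) := by nlinarith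
      nlinarith [mul_nonneg hvnn hcoef, hE1]
    by_contra hlt
    push_neg at hlt
    exact absurd key (not_le.mpr (by nlinarith [mul_neg_of_neg_of_pos (by linarith : v n * (1 - θ/(c+(n+1:ℕ))) + 1/(c+(n+1:ℕ))^2 - v (n+1) < 0) (pow_pos hs'0 2)]))
  have hvrate := bhw_rate c θ hc1 hθ0 hθ1 v hv0 hv1 hrec
  -- choose the subsequence exponent
  obtain ⟨m, hm4⟩ : ∃ m : ℕ, (4/θ : ℝ) ≤ m := ⟨⌈(4/θ : ℝ)⌉₊, Nat.le_ceil _⟩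
  have hm1 : 1 ≤ m := by
    by_contra h
    push_neg at h
    have hm0 : m = 0 := by omega
    rw [hm0] at hm4
    simp at hm4
    have : (0:ℝ) < 4/θ := by positivity
    linarith
  have hmq : 2 ≤ (m:ℝ) * (θ/2) := by
    have h4 : (4:ℝ) ≤ (m:ℝ) * θ := by
      rw [div_le_iff₀ hθ0] at hm4; linarith
    linarith
  have hCpos : (0:ℝ) < 16/θ + c + 1 := by
    have : (0:ℝ) < 16/θ := by positivity
    linarith
  -- summability of v along the subsequence
  have hbound : ∀ j : ℕ, v ((j+1)^m) ≤ (16/θ + c + 1) * (((j+1:ℕ)):ℝ) ^ (-((m:ℝ)*(θ/2))) := by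
    intro j
    have hn1 : 1 ≤ (j+1)^m := Nat.one_le_pow _ _ (Nat.succ_pos j)
    have h1 := hvrate ((j+1)^m) hn1
    have hb0 : (0:ℝ) < (((j+1)^m : ℕ):ℝ) := by
      exact_mod_cast Nat.lt_of_lt_of_le Nat.zero_lt_one hn1
    have h2 : (c + (((j+1)^m : ℕ):ℝ)) ^ (-(θ/2)) ≤ ((((j+1)^m : ℕ)):ℝ) ^ (-(θ/2)) :=
      Real.rpow_le_rpow_of_nonpos hb0 (by linarith) (by linarith)
    have h3 : ((((j+1)^m : ℕ)):ℝ) ^ (-(θ/2)) = (((j+1:ℕ)):ℝ) ^ (-((m:ℝ)*(θ/2))) := by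
      push_cast
      rw [← Real.rpow_natCast ((j:ℝ)+1) m, ← Real.rpow_mul (by positivity)]
      congr 1
      ring
    calc v ((j+1)^m) ≤ (16/θ + c + 1) * (c + (((j+1)^m : ℕ):ℝ)) ^ (-(θ/2)) := h1
      _ ≤ (16/θ + c + 1) * ((((j+1)^m : ℕ)):ℝ) ^ (-(θ/2)) :=
          mul_le_mul_of_nonneg_left h2 hCpos.le
      _ = (16/θ + c + 1) * (((j+1:ℕ)):ℝ) ^ (-((m:ℝ)*(θ/2))) := by rw [h3]
  have hsummable : Summable (fun j : ℕ => v ((j+1)^m)) := by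
    refine Summable.of_nonneg_of_le (fun j => hv0 _) hbound ?_
    refine Summable.mul_left _ ?_
    have hs : Summable (fun j : ℕ => ((j:ℕ):ℝ) ^ (-((m:ℝ)*(θ/2)))) :=
      Real.summable_nat_rpow.mpr (by linarith)
    exact (summable_nat_add_iff 1).mpr hs
  -- almost sure summability
  have hae : ∀ᵐ ω ∂μ, Summable (fun j : ℕ => (T ((j+1)^m) ω)^2) := by
    have hFmeas : ∀ j : ℕ, Measurable (fun ω => ENNReal.ofReal ((T ((j+1)^m) ω)^2)) :=
      fun j => (hT2meas _).ennreal_ofReal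
    have hlt : ∫⁻ ω, (∑' j : ℕ, ENNReal.ofReal ((T ((j+1)^m) ω)^2)) ∂μ ≠ ⊤ := by
      rw [lintegral_tsum fun j => (hFmeas j).aemeasurable]
      have heach : ∀ j : ℕ, ∫⁻ ω, ENNReal.ofReal ((T ((j+1)^m) ω)^2) ∂μ
          = ENNReal.ofReal (v ((j+1)^m)) := by
        intro j
        rw [hvdef]
        exact (ofReal_integral_eq_lintegral_ofReal (hT2int _)
          (ae_of_all _ fun ω => sq_nonneg _)).symm
      calc ∑' j : ℕ, ∫⁻ ω, ENNReal.ofReal ((T ((j+1)^m) ω)^2) ∂μ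
          = ∑' j : ℕ, ENNReal.ofReal (v ((j+1)^m)) := tsum_congr heach
        _ = ENNReal.ofReal (∑' j : ℕ, v ((j+1)^m)) :=
            (ENNReal.ofReal_tsum_of_nonneg (fun j => hv0 _) hsummable).symm
        _ ≠ ⊤ := ENNReal.ofReal_ne_top
    have hmeas : Measurable (fun ω => ∑' j : ℕ, ENNReal.ofReal ((T ((j+1)^m) ω)^2)) :=
      Measurable.ennreal_tsum hFmeas
    refine (ae_lt_top hmeas hlt).mono fun ω hω => ?_
    have hsumm := ENNReal.summable_toReal hω.ne
    exact hsumm.congr fun j => ENNReal.toReal_ofReal (sq_nonneg _)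
  -- conclusion
  refine hae.mono fun ω hsumω => ?_
  -- subsequence tends to zero
  have htend0 : Tendsto (fun j : ℕ => |T ((j+1)^m) ω|) atTop (nhds 0) := by
    have h1 : Tendsto (fun j : ℕ => (T ((j+1)^m) ω)^2) atTop (nhds 0) :=
      hsumω.tendsto_atTop_zero
    have h2 := (Real.continuous_sqrt.tendsto 0).comp h1
    rw [Real.sqrt_zero] at h2
    exact h2.congr fun j => Real.sqrt_sq_eq_abs _
  -- step bound
  have hstep : ∀ l : ℕ, dist (T l ω) (T (l+1) ω) ≤ 1/(c+((l+1:ℕ):ℝ)) := by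
    intro l
    have h := hTrec l ω
    have hs'0 := hcn (l+1)
    have heq : T (l+1) ω - T l ω = (X (l+1) ω - p - T l ω)/(c+((l+1:ℕ):ℝ)) := by
      rw [eq_div_iff hs'0.ne']
      have hcast : ((l+1:ℕ):ℝ) = (l:ℕ) + 1 := by push_cast; ring
      rw [hcast] at h ⊢
      linarith [h]
    have hnum : |X (l+1) ω - p - T l ω| ≤ 1 := by
      have hX := hX01' (l+1) ω
      have hR := hR01 l ω
      have hT : T l ω = N l ω / (N l ω + M l ω) - p := by rw [hTdef]
      rw [abs_le]
      constructor
      · rw [hT]; have := hR.2; linarith [hX.1]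
      · rw [hT]; have := hR.1; linarith [hX.2]
    rw [dist_comm, Real.dist_eq, heq, abs_div, abs_of_pos hs'0]
    gcongr
  -- gap bound over a block
  have hgap : ∀ j i : ℕ, (j+1)^m ≤ i → i ≤ (j+2)^m →
      dist (T ((j+1)^m) ω) (T i ω) ≤ (m:ℝ)*2^m*(1/((j:ℝ)+1)) := by
    intro j i hlo hhi
    have ha1 : (1:ℝ) ≤ (j:ℝ)+1 := by
      have : (0:ℝ) ≤ (j:ℝ) := Nat.cast_nonneg j
      linarith
    have ha0 : (0:ℝ) < (j:ℝ)+1 := by linarith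
    have hjmnat : 1 ≤ (j+1)^m := Nat.one_le_pow _ _ (Nat.succ_pos j)
    have hjm0 : (0:ℝ) < (((j+1)^m : ℕ):ℝ) := by exact_mod_cast hjmnat
    have hd := dist_le_Ico_sum_of_dist_le (f := fun l => T l ω) hlo
      (d := fun _ => 1/(((j+1)^m : ℕ):ℝ)) (fun {k} hk1 _hk2 => by
        refine le_trans (hstep k) ?_
        have h1 : (((j+1)^m : ℕ):ℝ) ≤ c + ((k+1:ℕ):ℝ) := by
          have h2 : (((j+1)^m : ℕ):ℝ) ≤ ((k:ℕ):ℝ) := Nat.cast_le.mpr hk1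
          push_cast at h2 ⊢
          linarith
        exact one_div_le_one_div_of_le hjm0 h1)
    have hcard : ∑ _l ∈ Finset.Ico ((j+1)^m) i, 1/(((j+1)^m : ℕ):ℝ)
        = ((i - (j+1)^m : ℕ):ℝ) * (1/(((j+1)^m : ℕ):ℝ)) := by
      rw [Finset.sum_const, Nat.card_Ico, nsmul_eq_mul]
    rw [hcard] at hd
    -- bound the count
    have hnat : ((i - (j+1)^m : ℕ):ℝ) ≤ (((j:ℝ)+1)+1)^m - ((j:ℝ)+1)^m := by
      have h2 : (i - (j+1)^m : ℕ) ≤ (j+2)^m - (j+1)^m := by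
        exact Nat.sub_le_sub_right hhi _
      have h3 : ((i - (j+1)^m : ℕ):ℝ) ≤ (((j+2)^m - (j+1)^m : ℕ):ℝ) := Nat.cast_le.mpr h2
      rw [Nat.cast_sub (Nat.pow_le_pow_left (by omega) m)] at h3
      push_cast at h3
      convert h3 using 2 <;> push_cast <;> ring
    have hcast : (((j+1)^m : ℕ):ℝ) = ((j:ℝ)+1)^m := by push_cast; ring
    -- chain of bounds
    have hpg := bhw_pow_gap ((j:ℝ)+1) ha1 m hm1
    have h2a : (((j:ℝ)+1)+1)^(m-1) ≤ (2*((j:ℝ)+1))^(m-1) :=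
      pow_le_pow_left₀ (by linarith) (by linarith) _
    have hpowsplit : (2*((j:ℝ)+1))^(m-1) = 2^(m-1) * ((j:ℝ)+1)^(m-1) := mul_pow _ _ _
    have hms : ((j:ℝ)+1)^m = ((j:ℝ)+1)^(m-1) * ((j:ℝ)+1) := by
      conv_lhs => rw [show m = (m-1)+1 by omega]
      rw [pow_succ]
    have h2m : (2:ℝ)^(m-1) ≤ 2^m := pow_le_pow_right₀ (by norm_num) (by omega)
    have hap : (0:ℝ) < ((j:ℝ)+1)^(m-1) := by positivity
    calc dist (T ((j+1)^m) ω) (T i ω)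
        ≤ ((i - (j+1)^m : ℕ):ℝ) * (1/(((j+1)^m : ℕ):ℝ)) := hd
      _ ≤ ((((j:ℝ)+1)+1)^m - ((j:ℝ)+1)^m) * (1/(((j+1)^m : ℕ):ℝ)) := by
          have : (0:ℝ) ≤ 1/(((j+1)^m : ℕ):ℝ) := by positivity
          exact mul_le_mul_of_nonneg_right hnat this
      _ ≤ ((m:ℝ) * (((j:ℝ)+1)+1)^(m-1)) * (1/(((j+1)^m : ℕ):ℝ)) := by
          have : (0:ℝ) ≤ 1/(((j+1)^m : ℕ):ℝ) := by positivity
          exact mul_le_mul_of_nonneg_right hpg this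
      _ ≤ ((m:ℝ) * (2^m * ((j:ℝ)+1)^(m-1))) * (1/(((j+1)^m : ℕ):ℝ)) := by
          have hb : (0:ℝ) ≤ 1/(((j+1)^m : ℕ):ℝ) := by positivity
          refine mul_le_mul_of_nonneg_right (mul_le_mul_of_nonneg_left ?_ (Nat.cast_nonneg m)) hb
          calc (((j:ℝ)+1)+1)^(m-1) ≤ 2^(m-1) * ((j:ℝ)+1)^(m-1) := by rw [← hpowsplit]; exact h2a
            _ ≤ 2^m * ((j:ℝ)+1)^(m-1) := mul_le_mul_of_nonneg_right h2m hap.le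
      _ = (m:ℝ)*2^m*(1/((j:ℝ)+1)) := by
          rw [hcast, hms]
          field_simp
  -- limit of the deterministic gap bound
  have hDlim : Tendsto (fun j : ℕ => (m:ℝ)*2^m*(1/((j:ℝ)+1))) atTop (nhds 0) := by
    have h := tendsto_one_div_add_atTop_nhds_zero_nat (𝕜 := ℝ)
    have h2 := h.const_mul ((m:ℝ)*2^m)
    simpa using h2
  rw [Metric.tendsto_atTop]
  intro ε hε
  have hε2 : 0 < ε/2 := by linarith
  obtain ⟨J₁, hJ₁⟩ := (Metric.tendsto_atTop.mp htend0) (ε/2) hε2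
  obtain ⟨J₂, hJ₂⟩ := (Metric.tendsto_atTop.mp hDlim) (ε/2) hε2
  refine ⟨(max J₁ J₂ + 1)^m, fun i hi => ?_⟩
  have hex : ∃ k : ℕ, i < (k+2)^m :=
    ⟨i, lt_of_lt_of_le (by omega) (Nat.le_self_pow (by omega) (i+2))⟩
  have hik : i < (Nat.find hex + 2)^m := Nat.find_spec hex
  have hJk : max J₁ J₂ ≤ Nat.find hex := by
    by_contra h
    push_neg at h
    have hle : (Nat.find hex + 2)^m ≤ (max J₁ J₂ + 1)^m := Nat.pow_le_pow_left (by omega) m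
    omega
  have hlow : (Nat.find hex + 1)^m ≤ i := by
    rcases Nat.eq_zero_or_pos (Nat.find hex) with hk0 | hkpos
    · have h1 : 1 ≤ (max J₁ J₂ + 1)^m := Nat.one_le_pow _ _ (by omega)
      rw [hk0]
      simpa using le_trans h1 hi
    · have hmin := Nat.find_min hex (Nat.sub_lt hkpos Nat.one_pos)
      have heq : Nat.find hex - 1 + 2 = Nat.find hex + 1 := by omega
      rw [heq] at hmin
      omega
  have hd1 := hJ₁ (Nat.find hex) (le_trans (le_max_left _ _) hJk)
  have hd2 := hJ₂ (Nat.find hex) (le_trans (le_max_right _ _) hJk)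
  rw [Real.dist_eq] at hd1 hd2
  rw [sub_zero] at hd1 hd2
  rw [abs_abs] at hd1
  have hDnn : (0:ℝ) ≤ (m:ℝ)*2^m*(1/((Nat.find hex:ℝ)+1)) := by positivity
  rw [abs_of_nonneg hDnn] at hd2
  have hgapk := hgap (Nat.find hex) i hlow hik.le
  have hTi : dist (N i ω / (N i ω + M i ω)) p = |T i ω| := by
    rw [Real.dist_eq, hTdef]
  rw [hTi]
  have htri : |T i ω| ≤ |T ((Nat.find hex + 1)^m) ω| + dist (T ((Nat.find hex + 1)^m) ω) (T i ω) := by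
    rw [Real.dist_eq]
    calc |T i ω| = |T ((Nat.find hex + 1)^m) ω + (T i ω - T ((Nat.find hex + 1)^m) ω)| := by
          congr 1; ring
      _ ≤ |T ((Nat.find hex + 1)^m) ω| + |T i ω - T ((Nat.find hex + 1)^m) ω| := abs_add_le _ _
      _ = |T ((Nat.find hex + 1)^m) ω| + |T ((Nat.find hex + 1)^m) ω - T i ω| := by
          rw [abs_sub_comm]
  calc |T i ω| ≤ |T ((Nat.find hex + 1)^m) ω| + dist (T ((Nat.find hex + 1)^m) ω) (T i ω) := htri
    _ < ε/2 + ε/2 := by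
        apply add_lt_add_of_lt_of_le hd1 (le_trans hgapk ?_)
        exact hd2.le
    _ = ε := by ring
end

section
/- Evaluation of the diffusive limiting covariance integral: let A = [[a + b(α−β), a], [1 − a − b(α−β), 1 − a]], v₁ = (1/(1−b(α−β)))·(a, 1−a−b(α−β))^T, B = diag(a/(1−b(α−β)), (1−a−b(α−β))/(1−b(α−β))), and ψ_A(s) = e^{sA} − v₁·(1, 1)·∫₀^s e^{tA} dt. If 0 ≤ b(α−β) < 1/2, then ∫₀^∞ ψ_A(s)·B·ψ_A(s)^T·e^{−s} ds − v₁·v₁^T = [a(1−a−b(α−β))/((1−b(α−β))²(1−2b(α−β)))]·[[1, −1], [−1, 1]]. -/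
open Matrix MeasureTheory

/-- The exponential of a real `2 × 2` matrix, `e^A = ∑ Aⁿ/n!`. -/
noncomputable def matExp (A : Matrix (Fin 2) (Fin 2) ℝ) : Matrix (Fin 2) (Fin 2) ℝ :=
  ∑' n : ℕ, ((n.factorial : ℝ)⁻¹) • A ^ n

private lemma integral_exp_neg_mul_Ioi (r : ℝ) (hr : 0 < r) :
    ∫ x in Set.Ioi (0 : ℝ), Real.exp (-r * x) = r⁻¹ := by
  have h := MeasureTheory.integral_comp_mul_left_Ioi (fun x => Real.exp (-x)) 0 hr
  simp only [mul_zero] at h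
  have h2 : ∀ x : ℝ, Real.exp (-r * x) = Real.exp (-(r * x)) := by intro x; ring_nf
  calc ∫ x in Set.Ioi (0 : ℝ), Real.exp (-r * x)
      = ∫ x in Set.Ioi (0 : ℝ), Real.exp (-(r * x)) := by simp only [h2]
    _ = r⁻¹ • ∫ x in Set.Ioi (0 : ℝ), Real.exp (-x) := h
    _ = r⁻¹ := by rw [integral_exp_neg_Ioi_zero]; simp

/-- Perron projection matrix. -/
private noncomputable def Mm (a l : ℝ) : Matrix (Fin 2) (Fin 2) ℝ :=
  (1/(1-l)) • !![a, a; 1-a-l, 1-a-l]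

/-- Second spectral projection matrix. -/
private noncomputable def Nm (a l : ℝ) : Matrix (Fin 2) (Fin 2) ℝ :=
  (1/(1-l)) • !![1-a-l, -a; -(1-a-l), a]

private lemma hMM (a l : ℝ) (hl : (1:ℝ) - l ≠ 0) : Mm a l * Mm a l = Mm a l := by
  ext i j
  fin_cases i <;> fin_cases j <;>
    simp [Mm, Matrix.mul_apply, Fin.sum_univ_two] <;> field_simp <;> ring

private lemma hMN (a l : ℝ) : Mm a l * Nm a l = 0 := by
  ext i j
  fin_cases i <;> fin_cases j <;>
    simp [Mm, Nm, Matrix.mul_apply, Fin.sum_univ_two] <;> ring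

private lemma hNM (a l : ℝ) : Nm a l * Mm a l = 0 := by
  ext i j
  fin_cases i <;> fin_cases j <;>
    simp [Mm, Nm, Matrix.mul_apply, Fin.sum_univ_two] <;> ring

private lemma hNN (a l : ℝ) (hl : (1:ℝ) - l ≠ 0) : Nm a l * Nm a l = Nm a l := by
  ext i j
  fin_cases i <;> fin_cases j <;>
    simp [Nm, Matrix.mul_apply, Fin.sum_univ_two] <;> field_simp <;> ring

private lemma hone (a l : ℝ) (hl : (1:ℝ) - l ≠ 0) :
    (1 : Matrix (Fin 2) (Fin 2) ℝ) = Mm a l + Nm a l := by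
  ext i j
  fin_cases i <;> fin_cases j <;>
    simp [Mm, Nm, Matrix.one_apply] <;> field_simp <;> ring

private lemma hAMN (a l : ℝ) (hl : (1:ℝ) - l ≠ 0) :
    !![a + l, a; 1 - a - l, 1 - a] = Mm a l + l • Nm a l := by
  ext i j
  fin_cases i <;> fin_cases j <;>
    simp [Mm, Nm] <;> field_simp <;> ring

private lemma hVMm (a l : ℝ) :
    Matrix.vecMulVec ((1 / (1 - l)) • ![a, 1 - a - l]) ![(1:ℝ), 1] = Mm a l := by
  ext i j
  fin_cases i <;> fin_cases j <;>
    simp [Mm, Matrix.vecMulVec_apply]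

private noncomputable def Bm (a l : ℝ) : Matrix (Fin 2) (Fin 2) ℝ :=
  !![a / (1 - l), 0; 0, (1 - a - l) / (1 - l)]

private lemma Bm_eq (a l : ℝ) :
    Matrix.diagonal ![a / (1 - l), (1 - a - l) / (1 - l)] = Bm a l := by
  ext i j
  fin_cases i <;> fin_cases j <;> simp [Bm, Matrix.diagonal]

private lemma hP1 (a l : ℝ) (hl : (1:ℝ) - l ≠ 0) :
    Mm a l * Bm a l * (Mm a l)ᵀ
      = Matrix.vecMulVec ((1 / (1 - l)) • ![a, 1 - a - l])
          ((1 / (1 - l)) • ![a, 1 - a - l]) := by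
  ext i j
  fin_cases i <;> fin_cases j <;>
    · simp only [Matrix.mul_apply, Matrix.transpose_apply, Fin.sum_univ_two,
        Matrix.vecMulVec_apply, Pi.smul_apply, Matrix.smul_apply, smul_eq_mul]
      simp [Mm, Bm]
      field_simp
      ring

private lemma hP2 (a l : ℝ) : Mm a l * Bm a l * (Nm a l)ᵀ = 0 := by
  ext i j
  fin_cases i <;> fin_cases j <;>
    · simp only [Matrix.mul_apply, Matrix.transpose_apply, Fin.sum_univ_two,
        Matrix.vecMulVec_apply, Pi.smul_apply, Matrix.smul_apply, smul_eq_mul]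
      simp [Mm, Nm, Bm]
      ring

private lemma hP3 (a l : ℝ) : Nm a l * Bm a l * (Mm a l)ᵀ = 0 := by
  ext i j
  fin_cases i <;> fin_cases j <;>
    · simp only [Matrix.mul_apply, Matrix.transpose_apply, Fin.sum_univ_two,
        Matrix.vecMulVec_apply, Pi.smul_apply, Matrix.smul_apply, smul_eq_mul]
      simp [Mm, Nm, Bm]
      ring

private lemma hP4 (a l : ℝ) (hl : (1:ℝ) - l ≠ 0) :
    Nm a l * Bm a l * (Nm a l)ᵀ
      = (a * (1 - a - l) / (1 - l)^2) • !![(1:ℝ), -1; -1, 1] := by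
  ext i j
  fin_cases i <;> fin_cases j <;>
    · simp only [Matrix.mul_apply, Matrix.transpose_apply, Fin.sum_univ_two,
        Matrix.vecMulVec_apply, Pi.smul_apply, Matrix.smul_apply, smul_eq_mul]
      simp [Nm, Bm]
      field_simp
      ring

private lemma expand_quad (M N B : Matrix (Fin 2) (Fin 2) ℝ) (e : ℝ) :
    (M + e • N) * B * (M + e • N)ᵀ
      = M * B * Mᵀ + e • (M * B * Nᵀ) + e • (N * B * Mᵀ) + (e * e) • (N * B * Nᵀ) := by
  simp only [Matrix.transpose_add, Matrix.transpose_smul, Matrix.add_mul, Matrix.mul_add,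
    Matrix.smul_mul, Matrix.mul_smul, smul_smul, smul_add]
  abel

set_option maxHeartbeats 1000000 in
/-- Evaluation of the diffusive limiting covariance integral (equation (17) of the paper):
with `A` the mean replacement matrix, `v₁` its Perron right eigenvector, `B` the mean
quadratic replacement matrix and `ψ_A(s) = e^{sA} − v₁(1,1)∫₀^s e^{tA} dt`, if
`0 ≤ b(α−β) < 1/2` then
`∫₀^∞ ψ_A(s) B ψ_A(s)ᵀ e^{−s} ds − v₁v₁ᵀ
  = a(1−a−b(α−β))/((1−b(α−β))²(1−2b(α−β))) [[1, −1], [−1, 1]]`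
(all integrals being entrywise). -/
theorem diffusive_covariance_integral
    (α β a b : ℝ)
    (hα : α ∈ Set.Ioo (0 : ℝ) 1) (hβ : β ∈ Set.Ioo (0 : ℝ) 1)
    (hαβ : α + β ≤ 1) (hab0 : 0 ≤ a + b) (hab1 : a + b ≤ 1)
    (hpos : 0 ≤ b * (α - β)) (hdiff : b * (α - β) < 1 / 2)
    (A B : Matrix (Fin 2) (Fin 2) ℝ) (v₁ : Fin 2 → ℝ)
    (hA : A = !![a + b * (α - β), a; 1 - a - b * (α - β), 1 - a])
    (hv₁ : v₁ = (1 / (1 - b * (α - β))) • ![a, 1 - a - b * (α - β)])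
    (hB : B = Matrix.diagonal ![a / (1 - b * (α - β)),
      (1 - a - b * (α - β)) / (1 - b * (α - β))])
    -- `ψ_A(s) = e^{sA} − v₁ (1 1) ∫₀^s e^{tA} dt`, the inner integral being entrywise
    (ψ : ℝ → Matrix (Fin 2) (Fin 2) ℝ)
    (hψ : ∀ s : ℝ, ψ s = matExp (s • A) -
      Matrix.vecMulVec v₁ ![1, 1] *
        Matrix.of (fun i j => ∫ t in (0 : ℝ)..s, matExp (t • A) i j)) :
    (Matrix.of fun i j =>
        ∫ s in Set.Ioi (0 : ℝ), (ψ s * B * (ψ s)ᵀ) i j * Real.exp (-s)) -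
      Matrix.vecMulVec v₁ v₁ =
    (a * (1 - a - b * (α - β)) /
      ((1 - b * (α - β)) ^ 2 * (1 - 2 * (b * (α - β))))) • !![(1 : ℝ), -1; -1, 1] := by
  set l : ℝ := b * (α - β) with hldef
  clear_value l
  have hl2 : (0 : ℝ) < 1 - 2 * l := by linarith
  have hl1 : (0 : ℝ) < 1 - l := by linarith
  have hl1' : (1 : ℝ) - l ≠ 0 := ne_of_gt hl1
  set M : Matrix (Fin 2) (Fin 2) ℝ := Mm a l with hM
  set N : Matrix (Fin 2) (Fin 2) ℝ := Nm a l with hN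
  set Q : Matrix (Fin 2) (Fin 2) ℝ := !![(1 : ℝ), -1; -1, 1] with hQ
  set c : ℝ := a * (1 - a - l) / (1 - l)^2 with hc
  have hA' : A = M + l • N := by rw [hA, ← hAMN a l hl1']
  have hApow : ∀ n : ℕ, A ^ n = M + l ^ n • N := by
    intro n
    induction n with
    | zero => simpa using hone a l hl1'
    | succ n ih =>
      rw [pow_succ, ih, hA', add_mul, mul_add, mul_add, Matrix.smul_mul, Matrix.smul_mul,
        Matrix.mul_smul, Matrix.mul_smul, hMM a l hl1', hMN a l, hNM a l, hNN a l hl1']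
      simp only [smul_zero, add_zero, zero_add, smul_smul, ← pow_succ]
      try rw [pow_succ]
      try abel
  -- the matrix exponential
  have hExp : ∀ s : ℝ, matExp (s • A) = Real.exp s • M + Real.exp (l * s) • N := by
    intro s
    have h1 : Summable (fun n : ℕ => s ^ n / n.factorial) :=
      Real.summable_pow_div_factorial s
    have h2 : Summable (fun n : ℕ => (l * s) ^ n / n.factorial) :=
      Real.summable_pow_div_factorial _
    have key : ∀ n : ℕ, ((n.factorial : ℝ)⁻¹) • (s • A) ^ n
        = (s ^ n / n.factorial) • M + ((l * s) ^ n / n.factorial) • N := by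
      intro n
      have hf : ((n.factorial : ℝ)) ≠ 0 := Nat.cast_ne_zero.2 n.factorial_ne_zero
      rw [smul_pow, hApow n]
      match_scalars <;> ring
    rw [matExp, tsum_congr key, Summable.tsum_add (h1.smul_const M) (h2.smul_const N),
      Summable.tsum_smul_const h1, Summable.tsum_smul_const h2]
    rw [Real.exp_eq_exp_ℝ, NormedSpace.exp_eq_tsum_div]
  -- the entrywise interval integral
  have hInt : ∀ s : ℝ,
      (Matrix.of fun i j => ∫ t in (0 : ℝ)..s, matExp (t • A) i j)
        = (Real.exp s - 1) • M + (∫ t in (0 : ℝ)..s, Real.exp (l * t)) • N := by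
    intro s
    ext i j
    have hcongr : ∀ t : ℝ, matExp (t • A) i j
        = Real.exp t * M i j + Real.exp (l * t) * N i j := by
      intro t; rw [hExp t]
      simp only [Matrix.add_apply, Matrix.smul_apply, smul_eq_mul]
    have i1 : IntervalIntegrable (fun t => Real.exp t * M i j) volume 0 s :=
      (Real.continuous_exp.mul continuous_const).intervalIntegrable 0 s
    have i2 : IntervalIntegrable (fun t => Real.exp (l * t) * N i j) volume 0 s :=
      (((Real.continuous_exp.comp (continuous_const.mul continuous_id)).mul
        continuous_const)).intervalIntegrable 0 s
    simp only [Matrix.of_apply, Matrix.add_apply, Matrix.smul_apply, smul_eq_mul]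
    rw [intervalIntegral.integral_congr (g := fun t => Real.exp t * M i j
        + Real.exp (l * t) * N i j) (fun t _ => hcongr t)]
    rw [intervalIntegral.integral_add i1 i2, intervalIntegral.integral_mul_const,
      intervalIntegral.integral_mul_const, integral_exp, Real.exp_zero]
  have hVM : Matrix.vecMulVec v₁ ![1, 1] = M := by rw [hv₁]; exact hVMm a l
  -- closed form for ψ
  have hψ' : ∀ s : ℝ, ψ s = M + Real.exp (l * s) • N := by
    intro s
    rw [hψ s, hExp s, hInt s, hVM, mul_add, Matrix.mul_smul, Matrix.mul_smul,
      hMM a l hl1', hMN a l]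
    match_scalars <;> ring
  have hBm : B = Bm a l := by rw [hB, Bm_eq]
  -- pointwise form of the integrand
  have hInteg : ∀ s : ℝ, ∀ i j, (ψ s * B * (ψ s)ᵀ) i j * Real.exp (-s)
      = (Matrix.vecMulVec v₁ v₁) i j * Real.exp (-s)
        + (c * Q i j) * Real.exp (-(1 - 2 * l) * s) := by
    intro s i j
    have hprod : ψ s * B * (ψ s)ᵀ
        = Matrix.vecMulVec v₁ v₁ + (Real.exp (l * s) * Real.exp (l * s)) • (c • Q) := by
      rw [hψ' s, hBm, expand_quad, hP1 a l hl1', hP2 a l, hP3 a l, hP4 a l hl1', hv₁]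
      simp only [smul_zero, add_zero]
      rfl
    rw [hprod]
    simp only [Matrix.add_apply, Matrix.smul_apply, smul_eq_mul]
    have hee : Real.exp (-(1 - 2 * l) * s)
        = Real.exp (l * s) * (Real.exp (l * s) * Real.exp (-s)) := by
      rw [← Real.exp_add, ← Real.exp_add]
      congr 1
      ring
    rw [hee]
    ring
  -- integrate
  have hIi1 : IntegrableOn (fun s => Real.exp (-s)) (Set.Ioi (0 : ℝ)) := by
    have := exp_neg_integrableOn_Ioi (0 : ℝ) (one_pos)
    simpa using this
  have hIi2 : IntegrableOn (fun s => Real.exp (-(1 - 2 * l) * s)) (Set.Ioi (0 : ℝ)) :=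
    exp_neg_integrableOn_Ioi 0 hl2
  have hIval : ∀ i j, (∫ s in Set.Ioi (0 : ℝ), (ψ s * B * (ψ s)ᵀ) i j * Real.exp (-s))
      = (Matrix.vecMulVec v₁ v₁) i j + c * Q i j * (1 - 2 * l)⁻¹ := by
    intro i j
    rw [setIntegral_congr_fun measurableSet_Ioi (fun s _ => hInteg s i j)]
    rw [integral_add (hIi1.const_mul _) (hIi2.const_mul _),
      integral_const_mul, integral_const_mul, integral_exp_neg_Ioi_zero,
      integral_exp_neg_mul_Ioi _ hl2]
    ring
  -- conclude
  ext i j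
  simp only [Matrix.sub_apply, Matrix.of_apply, hIval i j, Matrix.smul_apply, smul_eq_mul]
  have hcoef : a * (1 - a - l) / ((1 - l) ^ 2 * (1 - 2 * l)) = c * (1 - 2 * l)⁻¹ := by
    rw [hc]; field_simp
  rw [hcoef]
  ring
end

section
/- Diffusive-case covariance identity: let A = [[a + b(α−β), a], [1 − a − b(α−β), 1 − a]] and Σ₁ = [a(1−a−b(α−β))/((1−b(α−β))²(1−2b(α−β)))]·[[1, −1], [−1, 1]], with 0 ≤ b(α−β) < 1/2. Then for all 0 < s ≤ t, s·Σ₁·e^{log(t/s)·A^T} = s·(t/s)^{b(α−β)}·Σ₁, where e^{log(t/s)·A^T} is the matrix exponential of log(t/s)·A^T. -/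
open Matrix

/-- Diffusive-case covariance identity (equation (22) and the computation following it in the
paper): with `A = [[a + b(α−β), a], [1 − a − b(α−β), 1 − a]]` and
`Σ₁ = a(1−a−b(α−β))/((1−b(α−β))²(1−2b(α−β))) [[1, −1], [−1, 1]]`, for all `0 < s ≤ t` one has
`s Σ₁ e^{log(t/s) Aᵀ} = s (t/s)^{b(α−β)} Σ₁`. -/
theorem diffusive_covariance_identity
    (α β a b : ℝ)
    (hα : α ∈ Set.Ioo (0 : ℝ) 1) (hβ : β ∈ Set.Ioo (0 : ℝ) 1)
    (hαβ : α + β ≤ 1) (hab0 : 0 ≤ a + b) (hab1 : a + b ≤ 1)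
    (hpos : 0 ≤ b * (α - β)) (hdiff : b * (α - β) < 1 / 2)
    (A S : Matrix (Fin 2) (Fin 2) ℝ)
    (hA : A = !![a + b * (α - β), a; 1 - a - b * (α - β), 1 - a])
    (hS : S = (a * (1 - a - b * (α - β)) /
      ((1 - b * (α - β)) ^ 2 * (1 - 2 * (b * (α - β))))) • !![(1 : ℝ), -1; -1, 1]) :
    ∀ s t : ℝ, 0 < s → s ≤ t →
      s • (S * matExp (Real.log (t / s) • Aᵀ)) = (s * (t / s) ^ (b * (α - β))) • S := by
  intro s t hs hst
  set δ : ℝ := b * (α - β) with hδdef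
  have hq : (1 : ℝ) - δ ≠ 0 := by simp only [hδdef]; intro h; nlinarith
  set c : ℝ := Real.log (t / s) with hc
  set N : Matrix (Fin 2) (Fin 2) ℝ := !![a, 1 - a - δ; a, 1 - a - δ] with hN
  have hX : c • Aᵀ = (c * δ) • (1 : Matrix (Fin 2) (Fin 2) ℝ) + c • N := by
    subst hA
    have h2 : (!![a + δ, a; 1 - a - δ, 1 - a])ᵀ
        = δ • (1 : Matrix (Fin 2) (Fin 2) ℝ) + N := by
      ext i j
      fin_cases i <;> fin_cases j <;>
        simp [hN, Matrix.one_apply, Matrix.transpose_apply] <;> ring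
    rw [h2, smul_add, smul_smul]
  have hNN : N * N = (1 - δ) • N := by
    ext i j
    fin_cases i <;> fin_cases j <;>
      simp [hN, Matrix.mul_apply, Fin.sum_univ_two] <;> ring
  have hSN : S * N = 0 := by
    subst hS
    ext i j
    fin_cases i <;> fin_cases j <;>
      simp [hN, Matrix.mul_apply, Fin.sum_univ_two] <;> ring
  -- powers of c • Aᵀ
  have hpow : ∀ n : ℕ, (c • Aᵀ) ^ n =
      ((c * δ) ^ n) • (1 : Matrix (Fin 2) (Fin 2) ℝ) +
        ((c ^ n - (c * δ) ^ n) / (1 - δ)) • N := by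
    intro n
    induction n with
    | zero => simp
    | succ n ih =>
      rw [pow_succ, ih, hX]
      simp only [add_mul, mul_add, Matrix.smul_mul, Matrix.mul_smul, smul_smul, one_mul,
        mul_one, hNN]
      rw [pow_succ, pow_succ]
      match_scalars <;> field_simp <;> ring
  -- rewrite matExp as a combination of 1 and N
  have hsum1 : Summable (fun n : ℕ => ((n.factorial : ℝ))⁻¹ * (c * δ) ^ n) := by
    have := Real.summable_pow_div_factorial (c * δ)
    simpa [div_eq_inv_mul, mul_comm] using this
  have hsumc : Summable (fun n : ℕ => ((n.factorial : ℝ))⁻¹ * c ^ n) := by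
    have := Real.summable_pow_div_factorial c
    simpa [div_eq_inv_mul, mul_comm] using this
  have hsum2 : Summable (fun n : ℕ =>
      ((n.factorial : ℝ))⁻¹ * ((c ^ n - (c * δ) ^ n) / (1 - δ))) := by
    have h := (hsumc.sub hsum1).div_const (1 - δ)
    refine h.congr fun n => ?_
    field_simp
  have hExp : matExp (c • Aᵀ) =
      (∑' n : ℕ, ((n.factorial : ℝ))⁻¹ * (c * δ) ^ n) • (1 : Matrix (Fin 2) (Fin 2) ℝ) +
        (∑' n : ℕ, ((n.factorial : ℝ))⁻¹ * ((c ^ n - (c * δ) ^ n) / (1 - δ))) • N := by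
    rw [matExp]
    have hterm : ∀ n : ℕ, ((n.factorial : ℝ))⁻¹ • (c • Aᵀ) ^ n =
        (((n.factorial : ℝ))⁻¹ * (c * δ) ^ n) • (1 : Matrix (Fin 2) (Fin 2) ℝ) +
          (((n.factorial : ℝ))⁻¹ * ((c ^ n - (c * δ) ^ n) / (1 - δ))) • N := by
      intro n
      rw [hpow n, smul_add, smul_smul, smul_smul]

    rw [tsum_congr hterm,
      Summable.tsum_add (hsum1.smul_const _) (hsum2.smul_const _),
      Summable.tsum_smul_const hsum1, Summable.tsum_smul_const hsum2]
  have hE1 : (∑' n : ℕ, ((n.factorial : ℝ))⁻¹ * (c * δ) ^ n) = Real.exp (c * δ) := by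
    rw [Real.exp_eq_exp_ℝ, NormedSpace.exp_eq_tsum_div]
    exact tsum_congr fun n => by rw [div_eq_inv_mul]
  rw [hExp, mul_add, hE1]
  rw [Matrix.mul_smul, Matrix.mul_smul, mul_one, hSN, smul_zero, add_zero, smul_smul]
  congr 1
  congr 1
  have hts : 0 < t / s := div_pos (lt_of_lt_of_le hs hst) hs
  rw [Real.rpow_def_of_pos hts]
end
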